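/- For every complex number q with 0 < |q| < 1, the E₆ graph series satisfies Σ_{n₁,…,n₆ ≥ 0} q^{n₁n₂+n₁n₃+n₁n₄+n₂n₅+n₃n₆+n₁+n₂+n₃+n₄+n₅+n₆} / ((q)_{n₁}(q)_{n₂}(q)_{n₃}(q)_{n₄}(q)_{n₅}(q)_{n₆}) = q^{-1}/(q)_∞³ · Σ_{n≥1} n·q^n/(1 - q^n). -/

import Mathlib

/-- The finite q-Pochhammer symbol `(q)_n = ∏_{j=1}^n (1 - q^j)`. -/
noncomputable def qp (q : ℂ) (n : ℕ) : ℂ := ∏ j ∈ Finset.range n, (1 - q ^ (j + 1))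

/-- The infinite q-Pochhammer symbol `(q)_∞ = ∏_{j=1}^∞ (1 - q^j)`. -/
noncomputable def qpInf (q : ℂ) : ℂ := ∏' j : ℕ, (1 - q ^ (j + 1))

section
variable {q : ℂ}

lemma npow_lt (hq : ‖q‖ < 1) (n : ℕ) : ‖q ^ (n+1)‖ < 1 := by
  rw [norm_pow]
  exact pow_lt_one₀ (norm_nonneg q) hq (Nat.succ_ne_zero n)

lemma one_sub_ne (hq : ‖q‖ < 1) (n : ℕ) : 1 - q ^ (n+1) ≠ 0 := by
  intro h
  have h2 : q ^ (n+1) = 1 := by linear_combination -h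
  have h3 := npow_lt hq n
  rw [h2] at h3
  simp at h3

lemma qp_succ (n : ℕ) : qp q (n+1) = qp q n * (1 - q ^ (n+1)) := Finset.prod_range_succ _ n

lemma qp_zero : qp q 0 = 1 := rfl

lemma qp_ne_zero (hq : ‖q‖ < 1) (n : ℕ) : qp q n ≠ 0 :=
  Finset.prod_ne_zero_iff.2 fun j _ => one_sub_ne hq j

/-- real partial products lower bound -/
lemma real_prod_lb {r : ℝ} (hr0 : 0 ≤ r) (hr : r < 1) :
    ∃ c : ℝ, 0 < c ∧ ∀ n, c ≤ ∏ j ∈ Finset.range n, (1 - r ^ (j+1)) := by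
  have hfac : ∀ j : ℕ, 0 < 1 - r ^ (j+1) := fun j => by
    have : r ^ (j+1) < 1 := pow_lt_one₀ hr0 hr (Nat.succ_ne_zero j)
    linarith
  obtain ⟨N, hN⟩ := exists_pow_lt_of_lt_one (show (0:ℝ) < (1 - r)/2 by linarith) hr
  -- tail sums are small
  have tail : ∀ n, N ≤ n → (1:ℝ)/2 ≤ ∏ j ∈ Finset.Ico N n, (1 - r ^ (j+1)) := by
    intro n hn
    have key : ∀ m, (1 - ∑ j ∈ Finset.Ico N (N + m), r ^ (j+1)) ≤
        ∏ j ∈ Finset.Ico N (N + m), (1 - r ^ (j+1)) := by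
      intro m
      induction m with
      | zero => simp
      | succ k ih =>
        rw [show N + (k+1) = (N + k) + 1 by ring,
            Finset.sum_Ico_succ_top (Nat.le_add_right N k),
            Finset.prod_Ico_succ_top (Nat.le_add_right N k)]
        have h1 : 0 ≤ 1 - r ^ (N + k + 1) := (hfac (N+k)).le
        have h2 : 0 ≤ ∑ j ∈ Finset.Ico N (N + k), r ^ (j+1) :=
          Finset.sum_nonneg fun j _ => pow_nonneg hr0 _
        nlinarith [pow_nonneg hr0 (N + k + 1)]
    have hsum : ∑ j ∈ Finset.Ico N n, r ^ (j+1) ≤ 1/2 := by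
      have expand : ∑ j ∈ Finset.Ico N n, r ^ (j+1) = r ^ N * ∑ i ∈ Finset.range (n - N), r ^ (i+1) := by
        rw [Finset.sum_Ico_eq_sum_range, Finset.mul_sum]
        exact Finset.sum_congr rfl fun i _ => by rw [← pow_add]; ring_nf
      have geo : ∑ i ∈ Finset.range (n - N), r ^ (i+1) ≤ 1 / (1 - r) := by
        calc ∑ i ∈ Finset.range (n - N), r ^ (i+1)
            ≤ ∑' i : ℕ, r ^ (i+1) := by
              apply Summable.sum_le_tsum _ (fun i _ => pow_nonneg hr0 _)
              exact ((summable_geometric_of_lt_one hr0 hr).mul_left r).congr fun i => by ring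
          _ ≤ ∑' i : ℕ, r ^ i := by
              apply Summable.tsum_le_tsum _ (((summable_geometric_of_lt_one hr0 hr).mul_left r).congr fun i => by ring)
                (summable_geometric_of_lt_one hr0 hr)
              intro i
              exact pow_le_pow_of_le_one hr0 hr.le (Nat.le_succ i)
          _ = (1 - r)⁻¹ := tsum_geometric_of_lt_one hr0 hr
          _ = 1 / (1-r) := (one_div _).symm
      calc ∑ j ∈ Finset.Ico N n, r ^ (j+1) = r ^ N * ∑ i ∈ Finset.range (n - N), r ^ (i+1) := expand
        _ ≤ ((1-r)/2) * (1/(1-r)) := by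
            apply mul_le_mul hN.le geo (Finset.sum_nonneg fun i _ => pow_nonneg hr0 _)
            linarith
        _ = 1/2 := by
            rw [div_mul_div_comm]
            rw [div_eq_div_iff (by linarith) (by norm_num)]
            ring
    calc (1:ℝ)/2 ≤ 1 - ∑ j ∈ Finset.Ico N n, r ^ (j+1) := by linarith
      _ ≤ _ := by
          have := key (n - N)
          rwa [Nat.add_sub_cancel' hn] at this
  have hposN : 0 < ∏ j ∈ Finset.range N, (1 - r ^ (j+1)) :=
    Finset.prod_pos fun j _ => hfac j
  refine ⟨(∏ j ∈ Finset.range N, (1 - r ^ (j+1))) * (1/2), by positivity, fun n => ?_⟩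
  rcases le_or_gt N n with h | h
  · rw [← Finset.prod_range_mul_prod_Ico _ h]
    exact mul_le_mul_of_nonneg_left (tail n h) hposN.le
  · calc _ ≤ ∏ j ∈ Finset.range N, (1 - r ^ (j+1)) := by nlinarith
      _ ≤ ∏ j ∈ Finset.range n, (1 - r ^ (j+1)) := by
          rw [← Finset.prod_range_mul_prod_Ico _ h.le]
          have h2 : ∀ j ∈ Finset.Ico n N, 1 - r ^ (j+1) ≤ 1 := fun j _ => by
            have := pow_nonneg hr0 (j+1); linarith
          calc ∏ j ∈ Finset.range n, (1 - r ^ (j+1))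
              = (∏ j ∈ Finset.range n, (1 - r ^ (j+1))) * 1 := (mul_one _).symm
            _ ≥ _ := by
                apply mul_le_mul_of_nonneg_left _ (Finset.prod_pos fun j _ => hfac j).le
                exact Finset.prod_le_one (fun j _ => (hfac j).le) h2

lemma qp_norm_lb (hq : ‖q‖ < 1) : ∃ c : ℝ, 0 < c ∧ ∀ n, c ≤ ‖qp q n‖ := by
  obtain ⟨c, hc, h⟩ := real_prod_lb (norm_nonneg q) hq
  refine ⟨c, hc, fun n => (h n).trans ?_⟩
  rw [qp, norm_prod]
  apply Finset.prod_le_prod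
  · intro j _
    have : ‖q‖ ^ (j+1) < 1 := pow_lt_one₀ (norm_nonneg q) hq (Nat.succ_ne_zero j)
    linarith
  · intro j _
    calc 1 - ‖q‖ ^ (j+1) = ‖(1:ℂ)‖ - ‖q ^ (j+1)‖ := by rw [norm_one, norm_pow]
      _ ≤ ‖1 - q ^ (j+1)‖ := norm_sub_norm_le _ _

end

section
variable {q : ℂ}

lemma log_summable (hq : ‖q‖ < 1) : Summable fun n : ℕ => Complex.log (1 - q ^ (n+1)) := by
  apply Summable.of_norm_bounded_eventually (g := fun n => 3/2 * ‖q‖ ^ (n+1))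
  · exact (((summable_geometric_of_lt_one (norm_nonneg q) hq).mul_left ‖q‖).mul_left (3/2)).congr
      fun n => by rw [pow_succ]; ring
  · rw [Nat.cofinite_eq_atTop]
    have h0 : Filter.Tendsto (fun n : ℕ => ‖q‖ ^ (n+1)) Filter.atTop (nhds 0) := by
      have := (tendsto_pow_atTop_nhds_zero_of_lt_one (norm_nonneg q) hq)
      exact this.comp (Filter.tendsto_add_atTop_nat 1)
    filter_upwards [h0.eventually_le_const (by norm_num : (0:ℝ) < 1/2)] with n hn
    have : (1 : ℂ) - q ^ (n+1) = 1 + (-(q ^ (n+1))) := by ring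
    rw [this]
    calc ‖Complex.log (1 + -q ^ (n+1))‖ ≤ 3/2 * ‖-q ^ (n+1)‖ :=
          Complex.norm_log_one_add_half_le_self (by simpa using hn)
      _ = 3/2 * ‖q‖ ^ (n+1) := by rw [norm_neg, norm_pow]

lemma hasProd_qpInf (hq : ‖q‖ < 1) : HasProd (fun n : ℕ => 1 - q ^ (n+1)) (qpInf q) := by
  have := (Complex.hasProd_of_hasSum_log (f := fun n : ℕ => 1 - q ^ (n+1))
    (fun n => one_sub_ne hq n) (log_summable hq).hasSum).multipliable.hasProd
  exact this

lemma tendsto_qp (hq : ‖q‖ < 1) :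
    Filter.Tendsto (fun n => qp q n) Filter.atTop (nhds (qpInf q)) :=
  (hasProd_qpInf hq).tendsto_prod_nat

lemma qpInf_ne_zero (hq : ‖q‖ < 1) : qpInf q ≠ 0 := by
  obtain ⟨c, hc, h⟩ := qp_norm_lb hq
  have : c ≤ ‖qpInf q‖ := le_of_tendsto_of_tendsto' tendsto_const_nhds (tendsto_qp hq).norm h
  intro h0
  rw [h0, norm_zero] at this
  linarith

end

section
variable {q : ℂ}

noncomputable def Sq (q : ℂ) (m : ℕ) : ℂ := ∑' n : ℕ, q ^ (n * (m+1)) / qp q n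

lemma summable_Sq (hq : ‖q‖ < 1) (m : ℕ) :
    Summable fun n : ℕ => q ^ (n * (m+1)) / qp q n := by
  obtain ⟨c, hc, h⟩ := qp_norm_lb hq
  apply Summable.of_norm_bounded (g := fun n => c⁻¹ * ‖q‖ ^ n)
  · exact (summable_geometric_of_lt_one (norm_nonneg q) hq).mul_left _
  · intro n
    rw [norm_div, norm_pow]
    calc ‖q‖ ^ (n * (m+1)) / ‖qp q n‖ ≤ ‖q‖ ^ n / c := by
          apply div_le_div₀ (pow_nonneg (norm_nonneg q) n) _ hc (h n)
          exact pow_le_pow_of_le_one (norm_nonneg q) hq.le (Nat.le_mul_of_pos_right n m.succ_pos)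
      _ = c⁻¹ * ‖q‖ ^ n := by ring

lemma Sq_rec (hq : ‖q‖ < 1) (m : ℕ) : Sq q (m+1) = (1 - q ^ (m+1)) * Sq q m := by
  have h1 := summable_Sq hq m
  have h2 := summable_Sq hq (m+1)
  have key : Sq q m - Sq q (m+1) = q ^ (m+1) * Sq q m := by
    simp only [Sq]
    rw [← Summable.tsum_sub h1 h2]
    have hg : Summable fun n : ℕ => q ^ (n * (m+1)) / qp q n - q ^ (n * (m+2)) / qp q n :=
      h1.sub h2
    rw [Summable.tsum_eq_zero_add hg]
    have e0 : q ^ (0 * (m+1)) / qp q 0 - q ^ (0 * (m+2)) / qp q 0 = 0 := by simp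
    rw [e0, zero_add, ← tsum_mul_left]
    apply tsum_congr
    intro k
    have e2 : q ^ ((k+1) * (m+1)) = q ^ (k*(m+1)) * q ^ (m+1) := by
      rw [← pow_add]; congr 1; ring
    have e3 : q ^ ((k+1) * (m+2)) = q ^ (k*(m+1)) * q ^ (m+1) * q ^ (k+1) := by
      rw [← pow_add, ← pow_add]; congr 1; ring
    rw [div_sub_div_same, e2, e3, ← mul_one_sub, qp_succ,
        mul_div_mul_right _ _ (one_sub_ne hq k)]
    rw [mul_comm (q ^ (k*(m+1))) (q ^ (m+1)), mul_div_assoc]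
  linear_combination -key

lemma Sq_eq_mul (hq : ‖q‖ < 1) (m : ℕ) : Sq q m = qp q m * Sq q 0 := by
  induction m with
  | zero => simp [qp_zero]
  | succ k ih => rw [Sq_rec hq k, ih, qp_succ]; ring

lemma tendsto_Sq (hq : ‖q‖ < 1) :
    Filter.Tendsto (fun m => Sq q m) Filter.atTop (nhds 1) := by
  obtain ⟨c, hc, h⟩ := qp_norm_lb hq
  set r := ‖q‖ with hr
  have hr0 : 0 ≤ r := norm_nonneg q
  have hgeo : Summable fun k : ℕ => r ^ (k+1) :=
    ((summable_geometric_of_lt_one hr0 hq).mul_left r).congr fun k => by rw [pow_succ]; ring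
  have key : ∀ m, ‖Sq q m - 1‖ ≤ (c⁻¹ * (r * (1 - r)⁻¹)) * r ^ m := by
    intro m
    have hs := summable_Sq hq m
    have hshift : Summable fun k : ℕ => q ^ ((k+1) * (m+1)) / qp q (k+1) :=
      (summable_nat_add_iff (f := fun n : ℕ => q ^ (n * (m+1)) / qp q n) 1).2 hs
    have e1 : Sq q m - 1 = ∑' k : ℕ, q ^ ((k+1) * (m+1)) / qp q (k+1) := by
      simp only [Sq]
      rw [Summable.tsum_eq_zero_add hs]
      simp [qp_zero]
    rw [e1]
    have hbound : ∀ k : ℕ, ‖q ^ ((k+1) * (m+1)) / qp q (k+1)‖ ≤ c⁻¹ * r ^ m * r ^ (k+1) := by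
      intro k
      rw [norm_div, norm_pow]
      calc r ^ ((k+1) * (m+1)) / ‖qp q (k+1)‖ ≤ r ^ (m + (k+1)) / c := by
            apply div_le_div₀ (pow_nonneg hr0 _) _ hc (h _)
            apply pow_le_pow_of_le_one hr0 hq.le
            calc m + (k+1) = m + k + 1 := by ring
              _ ≤ k*m + (m + k + 1) := Nat.le_add_left _ _
              _ = (k+1) * (m+1) := by ring
        _ = c⁻¹ * r ^ m * r ^ (k+1) := by rw [pow_add]; ring
    have hbs : Summable fun k : ℕ => c⁻¹ * r ^ m * r ^ (k+1) := hgeo.mul_left _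
    calc ‖∑' k : ℕ, q ^ ((k+1) * (m+1)) / qp q (k+1)‖
        ≤ ∑' k : ℕ, ‖q ^ ((k+1) * (m+1)) / qp q (k+1)‖ :=
          norm_tsum_le_tsum_norm (hshift.norm)
      _ ≤ ∑' k : ℕ, c⁻¹ * r ^ m * r ^ (k+1) := Summable.tsum_le_tsum hbound hshift.norm hbs
      _ = c⁻¹ * r ^ m * ∑' k : ℕ, r ^ (k+1) := tsum_mul_left
      _ = c⁻¹ * r ^ m * (r * (1 - r)⁻¹) := by
          congr 1
          calc ∑' k : ℕ, r ^ (k+1) = ∑' k : ℕ, r * r ^ k :=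
                tsum_congr fun k => by rw [pow_succ']
            _ = r * (1 - r)⁻¹ := by rw [tsum_mul_left, tsum_geometric_of_lt_one hr0 hq]
      _ = (c⁻¹ * (r * (1 - r)⁻¹)) * r ^ m := by ring
  have h0 : Filter.Tendsto (fun m => Sq q m - 1) Filter.atTop (nhds 0) := by
    apply squeeze_zero_norm key
    have := (tendsto_pow_atTop_nhds_zero_of_lt_one hr0 hq).const_mul (c⁻¹ * (r * (1 - r)⁻¹))
    simpa using this
  have := h0.add_const 1
  simpa using this

lemma Sq_eq (hq : ‖q‖ < 1) (m : ℕ) : Sq q m = qp q m / qpInf q := by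
  have hlim : Filter.Tendsto (fun m => qp q m * Sq q 0) Filter.atTop (nhds (qpInf q * Sq q 0)) :=
    (tendsto_qp hq).mul_const _
  have hlim2 : Filter.Tendsto (fun m => Sq q m) Filter.atTop (nhds (qpInf q * Sq q 0)) := by
    apply hlim.congr
    intro m
    exact (Sq_eq_mul hq m).symm
  have huniq : qpInf q * Sq q 0 = 1 := tendsto_nhds_unique hlim2 (tendsto_Sq hq)
  have hS0 : Sq q 0 = (qpInf q)⁻¹ := eq_inv_of_mul_eq_one_left
    (by rw [mul_comm]; exact huniq)
  rw [Sq_eq_mul hq m, hS0, div_eq_mul_inv]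

end

section
variable {q : ℂ}

lemma tsum_pow_succ {x : ℂ} (hx : ‖x‖ < 1) : ∑' k : ℕ, x ^ (k+1) = x * (1 - x)⁻¹ := by
  calc ∑' k : ℕ, x ^ (k+1) = ∑' k : ℕ, x * x ^ k := tsum_congr fun k => by rw [pow_succ']
    _ = x * (1 - x)⁻¹ := by rw [tsum_mul_left, tsum_geometric_of_norm_lt_one hx]

lemma lambert (hq : ‖q‖ < 1) :
    ∑' m : ℕ, q ^ (m+1) / (1 - q ^ (m+1)) ^ 2
      = ∑' n : ℕ, ((n:ℂ) + 1) * q ^ (n+1) / (1 - q ^ (n+1)) := by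
  have hr0 : (0:ℝ) ≤ ‖q‖ := norm_nonneg q
  set F : ℕ → ℕ → ℂ := fun m k => ((k:ℂ)+1) * q ^ ((m+1)*(k+1)) with hFdef
  have hnorm : ∀ k : ℕ, ‖(k:ℂ)+1‖ = (k:ℝ)+1 := by
    intro k
    rw [show ((k:ℂ)+1) = ((k+1:ℕ):ℂ) by push_cast; ring, Complex.norm_natCast]
    push_cast; ring
  have h2 : Summable fun k : ℕ => ((k:ℝ)+1) * ‖q‖ ^ (k+1) := by
    have h3 : Summable fun n : ℕ => (n:ℝ)^1 * ‖q‖ ^ n :=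
      summable_pow_mul_geometric_of_norm_lt_one 1
        (by rwa [Real.norm_eq_abs, abs_of_nonneg hr0])
    have h4 := (summable_nat_add_iff (f := fun n : ℕ => (n:ℝ)^1 * ‖q‖ ^ n) 1).2 h3
    exact h4.congr fun k => by push_cast; ring
  have hg := Summable.mul_of_nonneg (f := fun n : ℕ => ‖q‖ ^ n)
      (g := fun k : ℕ => ((k:ℝ)+1) * ‖q‖ ^ (k+1))
      (summable_geometric_of_lt_one hr0 hq) h2
      (fun n => pow_nonneg hr0 n) (fun k => by positivity)
  have hF : Summable (Function.uncurry F) := by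
    apply Summable.of_norm_bounded hg
    rintro ⟨m, k⟩
    simp only [Function.uncurry_apply_pair, hFdef]
    rw [norm_mul, norm_pow, hnorm]
    calc ((k:ℝ)+1) * ‖q‖ ^ ((m+1)*(k+1)) ≤ ((k:ℝ)+1) * (‖q‖ ^ m * ‖q‖ ^ (k+1)) := by
          apply mul_le_mul_of_nonneg_left _ (by positivity)
          rw [← pow_add]
          apply pow_le_pow_of_le_one hr0 hq.le
          calc m + (k+1) = m + k + 1 := by ring
            _ ≤ m*k + (m + k + 1) := Nat.le_add_left _ _
            _ = (m+1)*(k+1) := by ring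
      _ = ‖q‖ ^ m * (((k:ℝ)+1) * ‖q‖ ^ (k+1)) := by ring
  have step1 : ∀ m : ℕ, q ^ (m+1) / (1 - q ^ (m+1)) ^ 2 = ∑' k : ℕ, F m k := by
    intro m
    have hx : ‖q ^ (m+1)‖ < 1 := npow_lt hq m
    calc q ^ (m+1) / (1 - q ^ (m+1)) ^ 2 = ∑' k : ℕ, (k:ℂ) * (q ^ (m+1)) ^ k :=
          (tsum_coe_mul_geometric_of_norm_lt_one hx).symm
      _ = ∑' k : ℕ, F m k := by
          rw [Summable.tsum_eq_zero_add (hasSum_coe_mul_geometric_of_norm_lt_one hx).summable]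
          simp only [Nat.cast_zero, zero_mul, zero_add]
          apply tsum_congr
          intro k
          simp only [hFdef]
          rw [pow_mul]
          push_cast
          ring
  have step2 : ∀ n : ℕ, ∑' m : ℕ, F m n = ((n:ℂ)+1) * q ^ (n+1) / (1 - q ^ (n+1)) := by
    intro n
    have hx : ‖q ^ (n+1)‖ < 1 := npow_lt hq n
    calc ∑' m : ℕ, F m n = ∑' m : ℕ, ((n:ℂ)+1) * (q ^ (n+1)) ^ (m+1) := by
          apply tsum_congr
          intro m
          simp only [hFdef]
          rw [mul_comm (m+1) (n+1), pow_mul]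
      _ = ((n:ℂ)+1) * (q ^ (n+1) * (1 - q ^ (n+1))⁻¹) := by
          rw [tsum_mul_left, tsum_pow_succ hx]
      _ = ((n:ℂ)+1) * q ^ (n+1) / (1 - q ^ (n+1)) := by
          rw [div_eq_mul_inv, mul_assoc]
  calc ∑' m : ℕ, q ^ (m+1) / (1 - q ^ (m+1)) ^ 2 = ∑' m : ℕ, ∑' k : ℕ, F m k :=
        tsum_congr step1
    _ = ∑' n : ℕ, ∑' m : ℕ, F m n := (Summable.tsum_comm hF).symm
    _ = ∑' n : ℕ, ((n:ℂ)+1) * q ^ (n+1) / (1 - q ^ (n+1)) := tsum_congr step2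

end

theorem E6_graph_series (q : ℂ) (h0 : 0 < ‖q‖) (h1 : ‖q‖ < 1) :
    (∑' (n₁ : ℕ) (n₂ : ℕ) (n₃ : ℕ) (n₄ : ℕ) (n₅ : ℕ) (n₆ : ℕ),
      q ^ (n₁ * n₂ + n₁ * n₃ + n₁ * n₄ + n₂ * n₅ + n₃ * n₆ + n₁ + n₂ + n₃ + n₄ + n₅ + n₆) /
        (qp q n₁ * qp q n₂ * qp q n₃ * qp q n₄ * qp q n₅ * qp q n₆))
      = q⁻¹ / (qpInf q) ^ 3 *
          ∑' n : ℕ, ((n : ℂ) + 1) * q ^ (n + 1) / (1 - q ^ (n + 1)) := by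
  have hq : ‖q‖ < 1 := h1
  have hq0 : q ≠ 0 := by
    intro h
    rw [h] at h0
    simp at h0
  have hP : ∀ n, qp q n ≠ 0 := qp_ne_zero hq
  have hI : qpInf q ≠ 0 := qpInf_ne_zero hq
  have hS : ∀ m : ℕ, ∑' n : ℕ, q ^ (n * (m+1)) / qp q n = qp q m / qpInf q :=
    fun m => Sq_eq hq m
  have hone : ∀ n : ℕ, (1 : ℂ) - q ^ (n+1) ≠ 0 := one_sub_ne hq
  have hgeom : ∀ m : ℕ, ∑' n : ℕ, (q ^ (m+1)) ^ n = (1 - q ^ (m+1))⁻¹ :=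
    fun m => tsum_geometric_of_norm_lt_one (npow_lt hq m)
  calc
    (∑' (n₁ : ℕ) (n₂ : ℕ) (n₃ : ℕ) (n₄ : ℕ) (n₅ : ℕ) (n₆ : ℕ),
      q ^ (n₁ * n₂ + n₁ * n₃ + n₁ * n₄ + n₂ * n₅ + n₃ * n₆ + n₁ + n₂ + n₃ + n₄ + n₅ + n₆) /
        (qp q n₁ * qp q n₂ * qp q n₃ * qp q n₄ * qp q n₅ * qp q n₆))
      = ∑' (n₁ : ℕ) (n₂ : ℕ) (n₃ : ℕ) (n₄ : ℕ) (n₅ : ℕ),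
          q ^ (n₁ * n₂ + n₁ * n₃ + n₁ * n₄ + n₂ * n₅ + n₁ + n₂ + n₃ + n₄ + n₅) /
            (qp q n₁ * qp q n₂ * qp q n₄ * qp q n₅ * qpInf q) := by
        refine tsum_congr fun n₁ => tsum_congr fun n₂ => tsum_congr fun n₃ =>
          tsum_congr fun n₄ => tsum_congr fun n₅ => ?_
        have e : ∀ n₆ : ℕ,
            q ^ (n₁ * n₂ + n₁ * n₃ + n₁ * n₄ + n₂ * n₅ + n₃ * n₆ + n₁ + n₂ + n₃ + n₄ + n₅ + n₆) /
              (qp q n₁ * qp q n₂ * qp q n₃ * qp q n₄ * qp q n₅ * qp q n₆)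
            = (q ^ (n₁ * n₂ + n₁ * n₃ + n₁ * n₄ + n₂ * n₅ + n₁ + n₂ + n₃ + n₄ + n₅) /
                (qp q n₁ * qp q n₂ * qp q n₃ * qp q n₄ * qp q n₅)) *
                (q ^ (n₆ * (n₃+1)) / qp q n₆) := by
          intro n₆
          rw [show n₁ * n₂ + n₁ * n₃ + n₁ * n₄ + n₂ * n₅ + n₃ * n₆ + n₁ + n₂ + n₃ + n₄ + n₅ + n₆
              = (n₁ * n₂ + n₁ * n₃ + n₁ * n₄ + n₂ * n₅ + n₁ + n₂ + n₃ + n₄ + n₅) + n₆ * (n₃+1)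
              from by ring, pow_add, div_mul_div_comm]
        rw [tsum_congr e, tsum_mul_left, hS n₃, div_mul_div_comm,
          div_eq_div_iff
            (mul_ne_zero (mul_ne_zero (mul_ne_zero (mul_ne_zero (mul_ne_zero (hP n₁) (hP n₂))
              (hP n₃)) (hP n₄)) (hP n₅)) hI)
            (mul_ne_zero (mul_ne_zero (mul_ne_zero (mul_ne_zero (hP n₁) (hP n₂)) (hP n₄))
              (hP n₅)) hI)]
        ring
    _ = ∑' (n₁ : ℕ) (n₂ : ℕ) (n₃ : ℕ) (n₄ : ℕ),
          q ^ (n₁ * n₂ + n₁ * n₃ + n₁ * n₄ + n₁ + n₂ + n₃ + n₄) /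
            (qp q n₁ * qp q n₄ * qpInf q ^ 2) := by
        refine tsum_congr fun n₁ => tsum_congr fun n₂ => tsum_congr fun n₃ =>
          tsum_congr fun n₄ => ?_
        have e : ∀ n₅ : ℕ,
            q ^ (n₁ * n₂ + n₁ * n₃ + n₁ * n₄ + n₂ * n₅ + n₁ + n₂ + n₃ + n₄ + n₅) /
              (qp q n₁ * qp q n₂ * qp q n₄ * qp q n₅ * qpInf q)
            = (q ^ (n₁ * n₂ + n₁ * n₃ + n₁ * n₄ + n₁ + n₂ + n₃ + n₄) /
                (qp q n₁ * qp q n₂ * qp q n₄ * qpInf q)) *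
                (q ^ (n₅ * (n₂+1)) / qp q n₅) := by
          intro n₅
          rw [show n₁ * n₂ + n₁ * n₃ + n₁ * n₄ + n₂ * n₅ + n₁ + n₂ + n₃ + n₄ + n₅
              = (n₁ * n₂ + n₁ * n₃ + n₁ * n₄ + n₁ + n₂ + n₃ + n₄) + n₅ * (n₂+1)
              from by ring, pow_add, div_mul_div_comm]
          congr 1
          ring
        rw [tsum_congr e, tsum_mul_left, hS n₂, div_mul_div_comm,
          div_eq_div_iff
            (mul_ne_zero (mul_ne_zero (mul_ne_zero (mul_ne_zero (hP n₁) (hP n₂)) (hP n₄)) hI) hI)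
            (mul_ne_zero (mul_ne_zero (hP n₁) (hP n₄)) (pow_ne_zero 2 hI))]
        ring
    _ = ∑' (n₁ : ℕ) (n₂ : ℕ) (n₃ : ℕ),
          q ^ (n₁ * n₂ + n₁ * n₃ + n₁ + n₂ + n₃) / qpInf q ^ 3 := by
        refine tsum_congr fun n₁ => tsum_congr fun n₂ => tsum_congr fun n₃ => ?_
        have e : ∀ n₄ : ℕ,
            q ^ (n₁ * n₂ + n₁ * n₃ + n₁ * n₄ + n₁ + n₂ + n₃ + n₄) /
              (qp q n₁ * qp q n₄ * qpInf q ^ 2)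
            = (q ^ (n₁ * n₂ + n₁ * n₃ + n₁ + n₂ + n₃) / (qp q n₁ * qpInf q ^ 2)) *
                (q ^ (n₄ * (n₁+1)) / qp q n₄) := by
          intro n₄
          rw [show n₁ * n₂ + n₁ * n₃ + n₁ * n₄ + n₁ + n₂ + n₃ + n₄
              = (n₁ * n₂ + n₁ * n₃ + n₁ + n₂ + n₃) + n₄ * (n₁+1)
              from by ring, pow_add, div_mul_div_comm]
          congr 1
          ring
        rw [tsum_congr e, tsum_mul_left, hS n₁, div_mul_div_comm,
          div_eq_div_iff
            (mul_ne_zero (mul_ne_zero (hP n₁) (pow_ne_zero 2 hI)) hI)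
            (pow_ne_zero 3 hI)]
        ring
    _ = ∑' (n₁ : ℕ) (n₂ : ℕ),
          q ^ (n₁ * n₂ + n₁ + n₂) / (qpInf q ^ 3 * (1 - q ^ (n₁+1))) := by
        refine tsum_congr fun n₁ => tsum_congr fun n₂ => ?_
        have e : ∀ n₃ : ℕ,
            q ^ (n₁ * n₂ + n₁ * n₃ + n₁ + n₂ + n₃) / qpInf q ^ 3
            = (q ^ (n₁ * n₂ + n₁ + n₂) / qpInf q ^ 3) * (q ^ (n₁+1)) ^ n₃ := by
          intro n₃
          rw [show n₁ * n₂ + n₁ * n₃ + n₁ + n₂ + n₃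
              = (n₁ * n₂ + n₁ + n₂) + (n₁+1) * n₃ from by ring, pow_add, pow_mul,
              mul_div_right_comm]
        rw [tsum_congr e, tsum_mul_left, hgeom n₁, ← div_eq_mul_inv, div_div]
    _ = ∑' (n₁ : ℕ), q ^ n₁ / (qpInf q ^ 3 * (1 - q ^ (n₁+1)) ^ 2) := by
        refine tsum_congr fun n₁ => ?_
        have e : ∀ n₂ : ℕ,
            q ^ (n₁ * n₂ + n₁ + n₂) / (qpInf q ^ 3 * (1 - q ^ (n₁+1)))
            = (q ^ n₁ / (qpInf q ^ 3 * (1 - q ^ (n₁+1)))) * (q ^ (n₁+1)) ^ n₂ := by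
          intro n₂
          rw [show n₁ * n₂ + n₁ + n₂ = n₁ + (n₁+1) * n₂ from by ring, pow_add, pow_mul,
              mul_div_right_comm]
        rw [tsum_congr e, tsum_mul_left, hgeom n₁, ← div_eq_mul_inv, div_div, mul_assoc,
            ← sq]
    _ = q⁻¹ / (qpInf q) ^ 3 *
          ∑' n : ℕ, ((n : ℂ) + 1) * q ^ (n + 1) / (1 - q ^ (n + 1)) := by
        rw [← lambert hq, ← tsum_mul_left]
        refine tsum_congr fun m => ?_
        rw [div_mul_div_comm,
          show q⁻¹ * q ^ (m+1) = q ^ m from by rw [pow_succ]; field_simp]
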